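/- Let π : X → Y be a factor map between minimal systems. If the proximal relation P(X) is closed in X × X, then P(Y) is closed in Y × Y. -/

import Mathlib

open Filter Set Topology

attribute [local instance] Ultrafilter.add Ultrafilter.addSemigroup

namespace ProxClosedFactorAux

variable {Z : Type*} [MetricSpace Z] [CompactSpace Z]

/-- The limit of the orbit of `z` under `F` along the ultrafilter `p`. -/
noncomputable def act (F : Z → Z) (p : Ultrafilter ℕ) (z : Z) : Z :=
  Ultrafilter.extend (fun n => F^[n] z) p

theorem act_tendsto (F : Z → Z) (p : Ultrafilter ℕ) (z : Z) :
    Tendsto (fun n => F^[n] z) p (𝓝 (act F p z)) :=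
  ultrafilter_extend_eq_iff.mp rfl

theorem act_pure (F : Z → Z) (n : ℕ) (z : Z) : act F (pure n) z = F^[n] z :=
  congrFun (ultrafilter_extend_extends (fun n => F^[n] z)) n

theorem continuous_act (F : Z → Z) (z : Z) : Continuous (fun p => act F p z) :=
  continuous_ultrafilter_extend _

theorem act_add {F : Z → Z} (hF : Continuous F) (p q : Ultrafilter ℕ) (z : Z) :
    act F (p + q) z = act F p (act F q z) := by
  refine tendsto_nhds_unique (act_tendsto F (p + q) z) ?_
  rw [Filter.tendsto_def]
  intro O hO
  obtain ⟨U, hUO, hUopen, hcU⟩ := mem_nhds_iff.mp hO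
  have h1 : ∀ᶠ m in p, F^[m] (act F q z) ∈ U :=
    (act_tendsto F p (act F q z)) (hUopen.mem_nhds hcU)
  have : ∀ᶠ k in ↑(p + q), F^[k] z ∈ O := by
    rw [Ultrafilter.eventually_add]
    filter_upwards [h1] with m hm
    have h2 : Tendsto (fun n => F^[m] (F^[n] z)) q (𝓝 (F^[m] (act F q z))) :=
      ((hF.iterate m).tendsto _).comp (act_tendsto F q z)
    filter_upwards [h2 (hUopen.mem_nhds hm)] with n hn
    rw [Function.iterate_add_apply]
    exact hUO hn
  exact this

theorem act_semiconj {W : Type*} [MetricSpace W] [CompactSpace W]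
    {F : Z → Z} {G : W → W} {π : Z → W} (hπ : Continuous π)
    (h : Function.Semiconj π F G) (p : Ultrafilter ℕ) (z : Z) :
    π (act F p z) = act G p (π z) := by
  refine tendsto_nhds_unique ?_ (act_tendsto G p (π z))
  have h1 : Tendsto (fun n => π (F^[n] z)) p (𝓝 (π (act F p z))) :=
    (hπ.tendsto _).comp (act_tendsto F p z)
  have hfun : (fun n : ℕ => G^[n] (π z)) = fun n => π (F^[n] z) :=
    funext fun n => ((h.iterate_right n) z).symm
  rw [hfun]
  exact h1

theorem exists_act_eq {F : Z → Z} (z : Z)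
    (hmin : Dense (Set.range fun n : ℕ => F^[n] z)) (w : Z) :
    ∃ p : Ultrafilter ℕ, act F p z = w := by
  have hcl : IsClosed (Set.range fun p : Ultrafilter ℕ => act F p z) :=
    (isCompact_range (continuous_act F z)).isClosed
  have hsub : (Set.range fun n : ℕ => F^[n] z) ⊆ Set.range fun p => act F p z := by
    rintro _ ⟨n, rfl⟩; exact ⟨pure n, act_pure F n z⟩
  have hw : w ∈ closure (Set.range fun n : ℕ => F^[n] z) := hmin w
  have : w ∈ Set.range fun p => act F p z := by
    have := closure_mono hsub hw
    rwa [hcl.closure_eq] at this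
  exact this

theorem exists_ultrafilter {F : Z → Z} {z₁ z₂ : Z}
    (h : ∀ ε > (0 : ℝ), ∃ n : ℕ, dist (F^[n] z₁) (F^[n] z₂) < ε) :
    ∃ p : Ultrafilter ℕ, act F p z₁ = act F p z₂ := by
  set A : {ε : ℝ // 0 < ε} → Set ℕ := fun ε => {n | dist (F^[n] z₁) (F^[n] z₂) < ε.1} with hA
  haveI : Nonempty {ε : ℝ // 0 < ε} := ⟨⟨1, one_pos⟩⟩
  have hAne : ∀ ε, (A ε).Nonempty := fun ⟨ε, hε⟩ => h ε hε
  have hdir : Directed (· ≥ ·) fun ε => (𝓟 (A ε) : Filter ℕ) := by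
    rintro ⟨ε, hε⟩ ⟨ε', hε'⟩
    refine ⟨⟨min ε ε', lt_min hε hε'⟩, ?_, ?_⟩
    · refine principal_mono.mpr fun n hn => ?_
      simp only [hA, Set.mem_setOf_eq] at hn ⊢
      exact lt_of_lt_of_le hn (min_le_left _ _)
    · refine principal_mono.mpr fun n hn => ?_
      simp only [hA, Set.mem_setOf_eq] at hn ⊢
      exact lt_of_lt_of_le hn (min_le_right _ _)
  have hne : (⨅ ε, (𝓟 (A ε) : Filter ℕ)).NeBot :=
    iInf_neBot_of_directed hdir fun ε => principal_neBot_iff.mpr (hAne ε)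
  obtain ⟨p, hp⟩ := Ultrafilter.exists_le (⨅ ε, (𝓟 (A ε) : Filter ℕ))
  have hmem : ∀ ε : ℝ, 0 < ε → {n : ℕ | dist (F^[n] z₁) (F^[n] z₂) < ε} ∈ p := by
    intro ε hε
    have h1 : (⨅ ε, (𝓟 (A ε) : Filter ℕ)) ≤ 𝓟 (A ⟨ε, hε⟩) := iInf_le _ (⟨ε, hε⟩ : {ε : ℝ // 0 < ε})
    exact le_principal_iff.mp (hp.trans h1)
  refine ⟨p, ?_⟩
  have key : ∀ ε > (0 : ℝ), dist (act F p z₁) (act F p z₂) < ε := by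
    intro ε hε
    have e1 : ∀ᶠ n in p, dist (F^[n] z₁) (act F p z₁) < ε / 3 :=
      Metric.tendsto_nhds.mp (act_tendsto F p z₁) (ε / 3) (by linarith)
    have e2 : ∀ᶠ n in p, dist (F^[n] z₂) (act F p z₂) < ε / 3 :=
      Metric.tendsto_nhds.mp (act_tendsto F p z₂) (ε / 3) (by linarith)
    have e3 : ∀ᶠ n in p, dist (F^[n] z₁) (F^[n] z₂) < ε / 3 := hmem _ (by linarith)
    obtain ⟨n, hn1, hn2, hn3⟩ := (e1.and (e2.and e3)).exists
    have ht := dist_triangle4 (act F p z₁) (F^[n] z₁) (F^[n] z₂) (act F p z₂)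
    have hc1 : dist (act F p z₁) (F^[n] z₁) = dist (F^[n] z₁) (act F p z₁) := dist_comm _ _
    linarith
  have h0 : dist (act F p z₁) (act F p z₂) ≤ 0 := by
    refine le_of_forall_pos_le_add ?_
    intro ε hε
    have := key ε hε
    linarith
  exact eq_of_dist_eq_zero (le_antisymm h0 dist_nonneg)

theorem prox_of_act_eq {F : Z → Z} {z₁ z₂ : Z} (p : Ultrafilter ℕ)
    (h : act F p z₁ = act F p z₂) :
    ∀ ε > (0 : ℝ), ∃ n : ℕ, dist (F^[n] z₁) (F^[n] z₂) < ε := by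
  intro ε hε
  have e1 : ∀ᶠ n in p, dist (F^[n] z₁) (act F p z₁) < ε / 2 :=
    Metric.tendsto_nhds.mp (act_tendsto F p z₁) (ε / 2) (by linarith)
  have e2 : ∀ᶠ n in p, dist (F^[n] z₂) (act F p z₂) < ε / 2 :=
    Metric.tendsto_nhds.mp (act_tendsto F p z₂) (ε / 2) (by linarith)
  obtain ⟨n, hn1, hn2⟩ := (e1.and e2).exists
  rw [h] at hn1
  have ht := dist_triangle (F^[n] z₁) (act F p z₂) (F^[n] z₂)
  have hc : dist (act F p z₂) (F^[n] z₂) = dist (F^[n] z₂) (act F p z₂) := dist_comm _ _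
  exact ⟨n, by linarith⟩

end ProxClosedFactorAux

open ProxClosedFactorAux

/-- If `π : X → Y` is a factor map between minimal systems and the proximal relation
`P(X)` is closed, then `P(Y)` is closed. -/
theorem prox_closed_factor {X Y : Type*} [MetricSpace X] [CompactSpace X]
    [MetricSpace Y] [CompactSpace Y]
    (T : X → X) (hT : Continuous T) (hTs : Function.Surjective T)
    (S : Y → Y) (hS : Continuous S) (hSs : Function.Surjective S)
    (hminX : ∀ x : X, Dense (Set.range fun n : ℕ => T^[n] x))
    (hminY : ∀ y : Y, Dense (Set.range fun n : ℕ => S^[n] y))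
    (π : X → Y) (hπc : Continuous π) (hπs : Function.Surjective π)
    (hcomm : π ∘ T = S ∘ π)
    (hPX : IsClosed {p : X × X |
      ∀ ε > (0 : ℝ), ∃ n : ℕ, dist (T^[n] p.1) (T^[n] p.2) < ε}) :
    IsClosed {q : Y × Y |
      ∀ ε > (0 : ℝ), ∃ n : ℕ, dist (S^[n] q.1) (S^[n] q.2) < ε} := by
  classical
  have hsemi : Function.Semiconj π T S := fun z => congrFun hcomm z
  have key : {q : Y × Y | ∀ ε > (0 : ℝ), ∃ n : ℕ, dist (S^[n] q.1) (S^[n] q.2) < ε}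
      = Prod.map π π ''
        {p : X × X | ∀ ε > (0 : ℝ), ∃ n : ℕ, dist (T^[n] p.1) (T^[n] p.2) < ε} := by
    apply Set.Subset.antisymm
    · rintro ⟨y₁, y₂⟩ hy
      simp only [Set.mem_setOf_eq] at hy
      obtain ⟨q, hq⟩ := exists_ultrafilter (F := S) hy
      obtain ⟨r, hr⟩ := exists_act_eq (F := S) (act S q y₂) (hminY _) y₂
      set J : Set (Ultrafilter ℕ) :=
        (Set.range (· + q)) ∩ {p | act S p y₂ = y₂} with hJ
      have hJne : J.Nonempty := by
        refine ⟨r + q, ⟨r, rfl⟩, ?_⟩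
        show act S (r + q) y₂ = y₂
        rw [act_add hS]
        exact hr
      have hJcomp : IsCompact J :=
        (isCompact_range (Ultrafilter.continuous_add_left q)).inter_right
          (isClosed_singleton.preimage (continuous_act S y₂))
      have hJadd : ∀ x ∈ J, ∀ y ∈ J, x + y ∈ J := by
        rintro x ⟨⟨s, rfl⟩, hx⟩ y ⟨⟨s', rfl⟩, hy'⟩
        refine ⟨⟨s + q + s', add_assoc _ _ _⟩, ?_⟩
        show act S ((s + q) + (s' + q)) y₂ = y₂
        rw [act_add hS]
        simp only [Set.mem_setOf_eq] at hx hy'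
        rw [hy', hx]
      obtain ⟨v, hvJ, hvv⟩ := exists_idempotent_in_compact_add_subsemigroup
        (fun r => Ultrafilter.continuous_add_left r) J hJne hJcomp hJadd
      obtain ⟨⟨s, rfl⟩, hv2⟩ := hvJ
      simp only [Set.mem_setOf_eq] at hv2
      have hvy1 : act S (s + q) y₁ = y₂ := by
        rw [act_add hS, hq, ← act_add hS]
        exact hv2
      obtain ⟨x₁, hx₁⟩ := hπs y₁
      refine ⟨(x₁, act T (s + q) x₁), ?_, ?_⟩
      · simp only [Set.mem_setOf_eq]
        refine prox_of_act_eq (s + q) ?_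
        have h1 : act T ((s + q) + (s + q)) x₁ = act T (s + q) x₁ := by rw [hvv]
        rw [act_add hT] at h1
        exact h1.symm
      · have hπx₂ : π (act T (s + q) x₁) = y₂ := by
          rw [act_semiconj hπc hsemi, hx₁, hvy1]
        simp [Prod.map, hx₁, hπx₂]
    · rintro ⟨y₁, y₂⟩ ⟨⟨x₁, x₂⟩, hx, hmap⟩
      simp only [Prod.map, Prod.mk.injEq] at hmap
      obtain ⟨h1, h2⟩ := hmap
      subst h1; subst h2
      simp only [Set.mem_setOf_eq] at hx ⊢
      intro ε hε
      obtain ⟨δ, hδ, hδε⟩ := Metric.uniformContinuous_iff.mp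
        (CompactSpace.uniformContinuous_of_continuous hπc) ε hε
      obtain ⟨n, hn⟩ := hx δ hδ
      refine ⟨n, ?_⟩
      have e1 : S^[n] (π x₁) = π (T^[n] x₁) := ((hsemi.iterate_right n) x₁).symm
      have e2 : S^[n] (π x₂) = π (T^[n] x₂) := ((hsemi.iterate_right n) x₂).symm
      rw [e1, e2]
      exact hδε hn
  rw [key]
  exact (hPX.isCompact.image (hπc.prodMap hπc)).isClosed
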